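/- Let 1 ≤ i_1 < i_2 < ⋯ < i_l ≤ r and let t_1, …, t_l be the target vertices of the right moves R_{i_1}, …, R_{i_l}, all computed on the original diagram D. Then t_1, …, t_l are pairwise distinct. Consequently the set (D \ {x_{i_1},…,x_{i_l}}) ∪ {t_1,…,t_l}, which is the weight diagram of the right path R_θ(D) associated with θ ∈ {0,1}^r having 1's exactly in positions i_1,…,i_l, again has exactly r elements. -/

import Mathlib

/-- Number of elements of `D` strictly between `s` and `t`. -/
noncomputable def crossCount (D : Finset ℤ) (s t : ℤ) : ℕ :=
  ((Finset.Ioo s t).filter (fun z => z ∈ D)).card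

/-- `ℓ(s,t)`: the number of elements of `D` strictly between `s` and `t` minus the
number of integers strictly between `s` and `t` that are not in `D`. -/
noncomputable def ell (D : Finset ℤ) (s t : ℤ) : ℤ :=
  (crossCount D s t : ℤ) - (((Finset.Ioo s t).filter (fun z => z ∉ D)).card : ℤ)

/-- `t` is the target vertex of the right move `R_i` on the diagram `D`. -/
def IsRightMoveTarget (r : ℕ) (D : Finset ℤ) (x : Fin r → ℤ) (i : Fin r) (t : ℤ) : Prop :=
  t ∉ D ∧ x i < t ∧ ell D (x i) t = 0 ∧
    ∀ s : ℤ, s ∉ D → x i < s → s < t → 0 < ell D (x i) s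

lemma ell_self_succ (D : Finset ℤ) (a : ℤ) : ell D a (a+1) = 0 := by
  have h : Finset.Ioo a (a+1) = ∅ := by
    ext z; simp only [Finset.mem_Ioo, Finset.notMem_empty, iff_false]; omega
  simp [ell, crossCount, h]

lemma card_filter_Ioo_succ (p : ℤ → Prop) [DecidablePred p] (a s : ℤ) (h : a < s) :
    ((Finset.Ioo a (s+1)).filter p).card
      = ((Finset.Ioo a s).filter p).card + (if p s then 1 else 0) := by
  have hIoo : Finset.Ioo a (s+1) = insert s (Finset.Ioo a s) := by
    ext z; simp only [Finset.mem_Ioo, Finset.mem_insert]; omega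
  rw [hIoo, Finset.filter_insert]
  by_cases hp : p s
  · simp only [hp, if_true]
    rw [Finset.card_insert_of_notMem (by simp)]
  · simp [hp]

lemma ell_succ (D : Finset ℤ) (a s : ℤ) (h : a < s) :
    ell D a (s+1) = ell D a s + (if s ∈ D then 1 else -1) := by
  have h1 := card_filter_Ioo_succ (fun z => z ∈ D) a s h
  have h2 := card_filter_Ioo_succ (fun z => z ∉ D) a s h
  by_cases hD : s ∈ D <;>
    simp only [ell, crossCount, h1, h2, hD, if_true, if_false, not_true, not_false_iff] <;>
    push_cast <;> ring

lemma card_filter_Ioo_split (p : ℤ → Prop) [DecidablePred p] (a y tt : ℤ)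
    (h1 : a < y) (h2 : y < tt) :
    ((Finset.Ioo a tt).filter p).card
      = ((Finset.Ioo a y).filter p).card + (if p y then 1 else 0)
        + ((Finset.Ioo y tt).filter p).card := by
  have hsplit : Finset.Ioo a tt = (Finset.Ioo a y) ∪ insert y (Finset.Ioo y tt) := by
    ext z; simp only [Finset.mem_Ioo, Finset.mem_union, Finset.mem_insert]; omega
  have hdisj : Disjoint ((Finset.Ioo a y).filter p) ((insert y (Finset.Ioo y tt)).filter p) := by
    rw [Finset.disjoint_left]
    intro z hz hz'
    simp only [Finset.mem_filter, Finset.mem_Ioo, Finset.mem_insert] at hz hz'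
    omega
  rw [hsplit, Finset.filter_union, Finset.card_union_of_disjoint hdisj, Finset.filter_insert]
  by_cases hp : p y
  · simp only [hp, if_true]
    rw [Finset.card_insert_of_notMem (by simp)]
    ring
  · simp [hp]

lemma ell_split (D : Finset ℤ) (a y tt : ℤ) (h1 : a < y) (h2 : y < tt) (hy : y ∈ D) :
    ell D a tt = ell D a y + 1 + ell D y tt := by
  have h3 := card_filter_Ioo_split (fun z => z ∈ D) a y tt h1 h2
  have h4 := card_filter_Ioo_split (fun z => z ∉ D) a y tt h1 h2
  simp only [ell, crossCount, h3, h4, hy, if_true, not_true, if_false]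
  push_cast; ring

lemma ell_nonneg (D : Finset ℤ) (a tt : ℤ)
    (hmin : ∀ s : ℤ, s ∉ D → a < s → s < tt → 0 < ell D a s) :
    ∀ n : ℕ, a + 1 + n ≤ tt → 0 ≤ ell D a (a + 1 + n) := by
  intro n
  induction n with
  | zero => intro _; simpa using (ell_self_succ D a).ge
  | succ n ih =>
    intro hle
    have hlt : a < a + 1 + n := by push_cast; omega
    have hstep := ell_succ D a (a + 1 + n) hlt
    have heq : a + 1 + (↑(n+1) : ℤ) = (a + 1 + n) + 1 := by push_cast; ring
    rw [heq, hstep]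
    by_cases hD : (a + 1 + (n:ℤ)) ∈ D
    · have := ih (by push_cast at hle ⊢; omega)
      simp only [hD, if_true]; omega
    · have hpos := hmin (a + 1 + n) hD hlt (by push_cast at hle ⊢; omega)
      simp only [hD, if_false]; omega

lemma targets_ne (D : Finset ℤ) (xi xj tt : ℤ) (hij : xi < xj) (hjD : xj ∈ D)
    (hjt : xj < tt) (h0i : ell D xi tt = 0) (h0j : ell D xj tt = 0)
    (hmin : ∀ s, s ∉ D → xi < s → s < tt → 0 < ell D xi s) : False := by
  have hadd := ell_split D xi xj tt hij hjt hjD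
  have hn := ell_nonneg D xi tt hmin (xj - xi - 1).toNat ?_
  · have hcast : xi + 1 + ((xj - xi - 1).toNat : ℤ) = xj := by
      rw [Int.toNat_of_nonneg (by omega)]; ring
    rw [hcast] at hn
    omega
  · rw [Int.toNat_of_nonneg (by omega)]; omega


/-- For `1 ≤ i₁ < ⋯ < i_l ≤ r` the targets `t₁, …, t_l` of the right moves
`R_{i₁}, …, R_{i_l}` (all computed on the original diagram `D`) are pairwise distinct;
consequently the diagram of the right path `R_θ(D)`, obtained by deleting the ×'s at the
vertices `x_{i₁}, …, x_{i_l}` and placing ×'s at `t₁, …, t_l`, again has exactly `r`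
elements. -/
theorem rightPath_targets_distinct
    (r : ℕ) (hr : 1 ≤ r) (D : Finset ℤ) (hD : D.card = r)
    (x : Fin r → ℤ) (hx : StrictMono x) (hxD : ∀ z : ℤ, z ∈ D ↔ ∃ i, x i = z)
    (l : ℕ) (idx : Fin l → Fin r) (hidx : StrictMono idx)
    (t : Fin l → ℤ) (ht : ∀ a : Fin l, IsRightMoveTarget r D x (idx a) (t a)) :
    Function.Injective t ∧
    ((D \ Finset.univ.image (fun a => x (idx a))) ∪ Finset.univ.image t).card = r := by
  have hinj : Function.Injective t := by
    intro a b hab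
    by_contra hne
    have hiab : idx a ≠ idx b := fun h => hne (hidx.injective h)
    rcases lt_or_gt_of_ne hiab with h | h
    · obtain ⟨htD, hxt, h0, hmin⟩ := ht a
      obtain ⟨_, hxt', h0', _⟩ := ht b
      exact targets_ne D (x (idx a)) (x (idx b)) (t a) (hx h)
        ((hxD _).mpr ⟨idx b, rfl⟩) (hab ▸ hxt') h0 (hab ▸ h0') hmin
    · obtain ⟨htD, hxt, h0, hmin⟩ := ht b
      obtain ⟨_, hxt', h0', _⟩ := ht a
      exact targets_ne D (x (idx b)) (x (idx a)) (t b) (hx h)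
        ((hxD _).mpr ⟨idx a, rfl⟩) (hab ▸ hxt') h0 (hab ▸ h0') hmin
  refine ⟨hinj, ?_⟩
  have hxinj : Function.Injective (fun a : Fin l => x (idx a)) :=
    fun a b hab => hidx.injective (hx.injective hab)
  have hS : (Finset.univ.image (fun a : Fin l => x (idx a))).card = l := by
    rw [Finset.card_image_of_injective _ hxinj, Finset.card_univ, Fintype.card_fin]
  have hT : (Finset.univ.image t).card = l := by
    rw [Finset.card_image_of_injective _ hinj, Finset.card_univ, Fintype.card_fin]
  have hSD : (Finset.univ.image (fun a : Fin l => x (idx a))) ⊆ D := by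
    intro z hz
    simp only [Finset.mem_image, Finset.mem_univ, true_and] at hz
    obtain ⟨a, rfl⟩ := hz
    exact (hxD _).mpr ⟨idx a, rfl⟩
  have hl : l ≤ r := by
    have := Fintype.card_le_of_injective idx hidx.injective
    simpa using this
  have hdisj : Disjoint (D \ Finset.univ.image (fun a : Fin l => x (idx a)))
      (Finset.univ.image t) := by
    rw [Finset.disjoint_right]
    intro z hz
    simp only [Finset.mem_image, Finset.mem_univ, true_and] at hz
    obtain ⟨a, rfl⟩ := hz
    intro hmem
    exact (ht a).1 (Finset.mem_sdiff.mp hmem).1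
  rw [Finset.card_union_of_disjoint hdisj, Finset.card_sdiff_of_subset hSD, hS, hT, hD]
  omega
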